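/- Let F = {p_0, ..., p_n} ⊂ ℝ^d not contained in any (d−1)-dimensional affine subspace, and suppose for λ close to 1 the attractor X of the homogeneous IFS S_i(x) = λx + (1−λ)p_i equals conv(F). If x lies on the boundary of X, i.e., in a bounding hyperplane V of conv(F) of dimension d−1, and p_i ∉ V, then no coding of x contains the digit i. Consequently every point having a universal coding lies in the interior of X: X_uni ⊆ int(X). -/

import Mathlib

open scoped BigOperators

/-- Key lemma: if `g ≤ c` on all the `p k`, `g x = c`, and `g (p i) < c`,
then any coding of `x` avoids the digit `i`. -/
lemma avoid_digit {d n : ℕ} (p : Fin (n + 1) → EuclideanSpace ℝ (Fin d)) {lam : ℝ}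
    (hlam : lam ∈ Set.Ioo (0 : ℝ) 1)
    (g : EuclideanSpace ℝ (Fin d) →L[ℝ] ℝ) (c : ℝ)
    (hle : ∀ k, g (p k) ≤ c)
    {x : EuclideanSpace ℝ (Fin d)} (hxc : g x = c)
    {i : Fin (n + 1)} (hpi : g (p i) < c)
    (a : ℕ → Fin (n + 1))
    (ha : x = ∑' j : ℕ, ((1 - lam) * lam ^ j) • p (a j)) :
    ∀ j, a j ≠ i := by
  obtain ⟨hl0, hl1⟩ := hlam
  have h1l : (0 : ℝ) < 1 - lam := by linarith
  have hgeo : Summable fun j : ℕ => lam ^ j := summable_geometric_of_lt_one hl0.le hl1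
  obtain ⟨C, hC⟩ := Finite.exists_le fun k => ‖p k‖
  have hC0 : (0 : ℝ) ≤ C := le_trans (norm_nonneg _) (hC 0)
  have hsum : Summable fun j : ℕ => ((1 - lam) * lam ^ j) • p (a j) := by
    apply Summable.of_norm_bounded
      (hgeo.mul_left ((1 - lam) * C))
    intro j
    have hpow : (0 : ℝ) ≤ lam ^ j := pow_nonneg hl0.le j
    rw [norm_smul]
    have : ‖(1 - lam) * lam ^ j‖ = (1 - lam) * lam ^ j := by
      rw [Real.norm_eq_abs, abs_of_nonneg (by positivity)]
    rw [this]
    calc (1 - lam) * lam ^ j * ‖p (a j)‖ ≤ (1 - lam) * lam ^ j * C := by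
          apply mul_le_mul_of_nonneg_left (hC _) (by positivity)
      _ = (1 - lam) * C * lam ^ j := by ring
  have hsum2 : Summable fun j : ℕ => ((1 - lam) * lam ^ j) * g (p (a j)) := by
    have h := hsum.map g g.continuous
    have heq : (⇑g ∘ fun j : ℕ => ((1 - lam) * lam ^ j) • p (a j))
        = fun j : ℕ => ((1 - lam) * lam ^ j) * g (p (a j)) := by
      funext j; simp [Function.comp, smul_eq_mul]
    rwa [heq] at h
  have htsum2 : (∑' j : ℕ, ((1 - lam) * lam ^ j) * g (p (a j))) = c := by
    have := (g.map_tsum hsum).symm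
    simp only [map_smul, smul_eq_mul] at this
    rw [this, ← ha, hxc]
  have hsum1 : Summable fun j : ℕ => ((1 - lam) * lam ^ j) * c :=
    (hgeo.mul_left (1 - lam)).mul_right c
  have htsum1 : (∑' j : ℕ, ((1 - lam) * lam ^ j) * c) = c := by
    have h : (fun j : ℕ => ((1 - lam) * lam ^ j) * c)
        = fun j : ℕ => ((1 - lam) * c) * lam ^ j := by
      funext j; ring
    rw [h, tsum_mul_left, tsum_geometric_of_lt_one hl0.le hl1]
    field_simp
  have hsumh : Summable fun j : ℕ => ((1 - lam) * lam ^ j) * (c - g (p (a j))) := by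
    have := hsum1.sub hsum2
    simpa [mul_sub] using this
  have htsumh : (∑' j : ℕ, ((1 - lam) * lam ^ j) * (c - g (p (a j)))) = 0 := by
    have h : (fun j : ℕ => ((1 - lam) * lam ^ j) * (c - g (p (a j))))
        = fun j : ℕ => ((1 - lam) * lam ^ j) * c - ((1 - lam) * lam ^ j) * g (p (a j)) := by
      funext j; ring
    rw [h, Summable.tsum_sub hsum1 hsum2, htsum1, htsum2, sub_self]
  intro j0 hji
  have hnn : ∀ j, 0 ≤ ((1 - lam) * lam ^ j) * (c - g (p (a j))) := by
    intro j
    apply mul_nonneg (by positivity)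
    linarith [hle (a j)]
  have hle0 : ((1 - lam) * lam ^ j0) * (c - g (p (a j0)))
      ≤ ∑' j : ℕ, ((1 - lam) * lam ^ j) * (c - g (p (a j))) :=
    Summable.le_tsum hsumh j0 fun j _ => hnn j
  have hpos : 0 < ((1 - lam) * lam ^ j0) * (c - g (p (a j0))) := by
    rw [hji]
    have : 0 < c - g (p i) := by linarith
    positivity
  rw [htsumh] at hle0
  linarith

theorem boundary_missing_digit_and_Xuni_subset_interior (d n : ℕ) (hd : 1 ≤ d)
    (p : Fin (n + 1) → EuclideanSpace ℝ (Fin d))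
    (hspan : affineSpan ℝ (Set.range p) = ⊤)
    (lam : ℝ) (hlam : lam ∈ Set.Ioo (0 : ℝ) 1)
    (X : Set (EuclideanSpace ℝ (Fin d)))
    (hXdef : X = convexHull ℝ (Set.range p))
    (f : EuclideanSpace ℝ (Fin d) →ₗ[ℝ] ℝ) (hf : f ≠ 0) (c : ℝ)
    (hsupp : ∀ y ∈ X, f y ≤ c)
    (x : EuclideanSpace ℝ (Fin d)) (hx : x ∈ X) (hxc : f x = c)
    (i : Fin (n + 1)) (hpi : f (p i) ≠ c) :
    (∀ a : ℕ → Fin (n + 1),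
        x = ∑' j : ℕ, ((1 - lam) * lam ^ j) • p (a j) → ∀ j, a j ≠ i) ∧
    (∀ y ∈ X,
        (∃ a : ℕ → Fin (n + 1),
          y = ∑' j : ℕ, ((1 - lam) * lam ^ j) • p (a j) ∧
          ∀ b : List (Fin (n + 1)), ∃ m : ℕ, ∀ t : Fin b.length, a (m + t) = b.get t) →
        y ∈ interior X) := by
  have hpX : ∀ k, p k ∈ X := by
    intro k
    rw [hXdef]
    exact subset_convexHull ℝ _ ⟨k, rfl⟩
  have hXconv : Convex ℝ X := hXdef ▸ convex_convexHull ℝ _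
  constructor
  · intro a ha
    have hle : ∀ k, (LinearMap.toContinuousLinearMap f) (p k) ≤ c := fun k =>
      hsupp (p k) (hpX k)
    have hpilt : (LinearMap.toContinuousLinearMap f) (p i) < c :=
      lt_of_le_of_ne (hsupp (p i) (hpX i)) hpi
    exact avoid_digit p hlam (LinearMap.toContinuousLinearMap f) c hle hxc hpilt a ha
  · intro y hy ⟨a, hay, huniv⟩
    by_contra hyint
    have hint : (interior X).Nonempty := by
      rw [hXdef, (convex_convexHull ℝ _).interior_nonempty_iff_affineSpan_eq_top,
        affineSpan_convexHull]
      exact hspan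
    obtain ⟨g, hg⟩ := geometric_hahn_banach_open_point (hXconv.interior) isOpen_interior hyint
    obtain ⟨x₀, hx₀⟩ := hint
    -- every point of X satisfies g z ≤ g y
    have hgle : ∀ z ∈ X, g z ≤ g y := by
      intro z hz
      by_contra hzy
      push_neg at hzy
      have hgx₀ : g x₀ < g y := hg x₀ hx₀
      set t : ℝ := (g z - g y) / (g z - g x₀) with ht
      have hden : 0 < g z - g x₀ := by linarith
      have ht0 : 0 < t := div_pos (by linarith) hden
      have ht1 : t < 1 := by
        rw [div_lt_one hden]; linarith
      have hw : t • x₀ + (1 - t) • z ∈ interior X :=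
        hXconv.combo_interior_closure_mem_interior hx₀ (subset_closure hz) ht0
          (by linarith) (by ring)
      have := hg _ hw
      simp only [map_add, map_smul, smul_eq_mul] at this
      have hgw : t * g x₀ + (1 - t) * g z = g y := by
        have h' : t * (g z - g x₀) = g z - g y := by rw [ht]; exact div_mul_cancel₀ _ hden.ne'
        linarith
      linarith
    -- some p k is off the hyperplane
    have hex : ∃ k, g (p k) ≠ g y := by
      by_contra hall
      push_neg at hall
      let A : AffineSubspace ℝ (EuclideanSpace ℝ (Fin d)) :=
        ⟨{z | g z = g y}, by
          intro cc u v w hu hv hw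
          simp only [Set.mem_setOf_eq, vsub_eq_sub, vadd_eq_add, map_add, map_smul,
            map_sub, smul_eq_mul] at *
          rw [hu, hv, hw]
          ring⟩
      have hsub : Set.range p ⊆ (A : Set _) := by
        rintro _ ⟨k, rfl⟩
        exact hall k
      have hTop : affineSpan ℝ (Set.range p) ≤ A := affineSpan_le.mpr hsub
      rw [hspan] at hTop
      have hx₀A : x₀ ∈ A := hTop trivial
      have : g x₀ = g y := hx₀A
      have := hg x₀ hx₀
      linarith
    obtain ⟨k, hk⟩ := hex
    have hklt : g (p k) < g y := lt_of_le_of_ne (hgle (p k) (hpX k)) hk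
    have havoid := avoid_digit p hlam g (g y) (fun k' => hgle (p k') (hpX k')) rfl hklt a hay
    obtain ⟨m, hm⟩ := huniv [k]
    have := hm ⟨0, by simp⟩
    simp at this
    exact havoid m this
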